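/- Fix α₀ > 0, an integer K ≥ 0, an integer M ≥ 1, a value θ̄ > 0, and ω > 0. Then lim_{ξ→∞} √(ξMθ̄/ω) · R_{α₀ − Mξ + K}(2√(ω ξ M θ̄)) = θ̄; that is, in the Pareto–Gamma–Gamma model, as the coefficient of variation 1/√ξ of the expert opinions tends to 0, the posterior mean of the Pareto tail index converges to the experts' common opinion θ̄. -/

import Mathlib

open MeasureTheory ProbabilityTheory Filter Set Real

/-- Modified Bessel function of the third kind:
`K_ν(z) = (1/2) ∫₀^∞ u^(ν-1) exp(-z(u+1/u)/2) du`. -/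
noncomputable def besselK (ν z : ℝ) : ℝ :=
  (1 / 2) * ∫ u in Set.Ioi (0 : ℝ), u ^ (ν - 1) * Real.exp (-(z * (u + 1 / u)) / 2)

/-- The ratio `R_ν(z) = K_{ν+1}(z) / K_ν(z)`. -/
noncomputable def besselR (ν z : ℝ) : ℝ := besselK (ν + 1) z / besselK ν z

section PGGaux

noncomputable def Jint (p b c : ℝ) : ℝ :=
  ∫ s in Set.Ioi (0:ℝ), s ^ p * Real.exp (-(b * s + c / s))

lemma pow_le_factorial_mul_exp (n : ℕ) {x : ℝ} (hx : 0 ≤ x) :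
    x ^ n ≤ n.factorial * Real.exp x := by
  have h1 : x ^ n / n.factorial ≤ ∑ i ∈ Finset.range (n + 1), x ^ i / i.factorial := by
    refine Finset.single_le_sum (f := fun i => x ^ i / (i.factorial : ℝ)) ?_ ?_
    · intro i _
      positivity
    · exact Finset.self_mem_range_succ n
  have h2 := Real.sum_le_exp_of_nonneg hx (n + 1)
  have h3 : x ^ n / n.factorial ≤ Real.exp x := le_trans h1 h2
  have hn : (0:ℝ) < n.factorial := by exact_mod_cast n.factorial_pos
  calc x ^ n = n.factorial * (x ^ n / n.factorial) := by field_simp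
  _ ≤ n.factorial * Real.exp x := by
      exact mul_le_mul_of_nonneg_left h3 hn.le

-- pointwise bound
lemma Jint_integrand_bound (p : ℝ) {b c : ℝ} (hb : 0 < b) (hc : 0 < c) :
    ∃ C : ℝ, 0 ≤ C ∧ ∀ s ∈ Set.Ioi (0:ℝ),
      s ^ p * Real.exp (-(b * s + c / s)) ≤ C * Real.exp (-(b / 2) * s) := by
  obtain ⟨n, hn⟩ := exists_nat_ge |p|
  refine ⟨n.factorial * ((2 / b) ^ n + (1 / c) ^ n), by positivity, ?_⟩
  intro s hs
  simp only [Set.mem_Ioi] at hs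
  have hexp : Real.exp (-(b * s + c / s)) =
      Real.exp (-(b/2) * s) * (Real.exp (-(b/2) * s) * Real.exp (-(c / s))) := by
    rw [← Real.exp_add, ← Real.exp_add]; ring_nf
  rcases le_or_gt 1 s with h1 | h1
  · -- s ≥ 1 : s^p ≤ s^n ≤ n! (2/b)^n exp((b/2) s)
    have hp1 : s ^ p ≤ s ^ (n:ℝ) :=
      Real.rpow_le_rpow_of_exponent_le h1 (le_trans (le_abs_self p) hn)
    have h2 : s ^ (n:ℝ) = s ^ n := by rw [Real.rpow_natCast]
    have h3 : ((b/2) * s) ^ n ≤ n.factorial * Real.exp ((b/2) * s) :=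
      pow_le_factorial_mul_exp n (by positivity)
    have h4 : s ^ n ≤ n.factorial * (2/b) ^ n * Real.exp ((b/2) * s) := by
      have hb2 : (0:ℝ) < b / 2 := by positivity
      have := h3
      rw [mul_pow] at this
      have h5 : s ^ n = (2/b)^n * ((b/2)^n * s ^ n) := by
        rw [← mul_assoc, ← mul_pow]
        have : (2/b) * (b/2) = 1 := by field_simp
        rw [this, one_pow, one_mul]
      rw [h5]
      calc (2/b)^n * ((b/2)^n * s ^ n) ≤ (2/b)^n * (n.factorial * Real.exp ((b/2)*s)) := by
            exact mul_le_mul_of_nonneg_left this (by positivity)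
      _ = n.factorial * (2/b)^n * Real.exp ((b/2)*s) := by ring
    have hcs : Real.exp (-(c / s)) ≤ 1 := Real.exp_le_one_iff.mpr (neg_nonpos.mpr (div_pos hc hs).le)
    calc s ^ p * Real.exp (-(b * s + c / s))
        = s ^ p * (Real.exp (-(b/2) * s) * (Real.exp (-(b/2) * s) * Real.exp (-(c/s)))) := by
          rw [hexp]
      _ ≤ (n.factorial * (2/b)^n) * Real.exp (-(b/2)*s) := by
          have hsp : s ^ p * Real.exp (-(b/2)*s) ≤ n.factorial * (2/b)^n := by
            have h6 : s ^ p ≤ n.factorial * (2/b)^n * Real.exp ((b/2)*s) := by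
              rw [← h2] at h4; linarith [hp1]
            calc s ^ p * Real.exp (-(b/2)*s)
                ≤ (n.factorial * (2/b)^n * Real.exp ((b/2)*s)) * Real.exp (-(b/2)*s) :=
                  mul_le_mul_of_nonneg_right h6 (Real.exp_pos _).le
              _ = n.factorial * (2/b)^n := by
                  rw [mul_assoc, ← Real.exp_add]; simp
          calc s ^ p * (Real.exp (-(b/2) * s) * (Real.exp (-(b/2) * s) * Real.exp (-(c/s))))
              ≤ s ^ p * (Real.exp (-(b/2) * s) * (Real.exp (-(b/2) * s) * 1)) := by
                refine mul_le_mul_of_nonneg_left ?_ (by positivity)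
                refine mul_le_mul_of_nonneg_left ?_ (by positivity)
                refine mul_le_mul_of_nonneg_left hcs (by positivity)
            _ = (s ^ p * Real.exp (-(b/2)*s)) * Real.exp (-(b/2)*s) := by ring
            _ ≤ (n.factorial * (2/b)^n) * Real.exp (-(b/2)*s) := by
                exact mul_le_mul_of_nonneg_right hsp (Real.exp_pos _).le
      _ ≤ (n.factorial * ((2/b)^n + (1/c)^n)) * Real.exp (-(b/2)*s) := by
          refine mul_le_mul_of_nonneg_right ?_ (Real.exp_pos _).le
          have : (0:ℝ) ≤ (1/c)^n := by positivity
          nlinarith [n.factorial_pos]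
  · -- 0 < s < 1
    have hp1 : s ^ p ≤ s ^ (-(n:ℝ)) :=
      Real.rpow_le_rpow_of_exponent_ge hs h1.le (neg_le_of_abs_le hn)
    have h2 : s ^ (-(n:ℝ)) = (1/s) ^ n := by
      rw [Real.rpow_neg hs.le, Real.rpow_natCast, one_div, inv_pow]
    have h3 : (c / s) ^ n ≤ n.factorial * Real.exp (c / s) :=
      pow_le_factorial_mul_exp n (by positivity)
    have h4 : (1/s) ^ n ≤ n.factorial * (1/c)^n * Real.exp (c/s) := by
      have h5 : (1/s)^n = (1/c)^n * ((c/s)^n) := by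
        rw [← mul_pow]; congr 1; field_simp
      rw [h5]
      calc (1/c)^n * ((c/s)^n) ≤ (1/c)^n * (n.factorial * Real.exp (c/s)) :=
            mul_le_mul_of_nonneg_left h3 (by positivity)
        _ = n.factorial * (1/c)^n * Real.exp (c/s) := by ring
    have hsp : s ^ p * Real.exp (-(c/s)) ≤ n.factorial * (1/c)^n := by
      have h6 : s ^ p ≤ n.factorial * (1/c)^n * Real.exp (c/s) := by
        rw [← h2] at h4; linarith
      rw [Real.exp_neg]
      calc s ^ p * (Real.exp (c/s))⁻¹
          ≤ (n.factorial * (1/c)^n * Real.exp (c/s)) * (Real.exp (c/s))⁻¹ :=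
            mul_le_mul_of_nonneg_right h6 (by positivity)
        _ = n.factorial * (1/c)^n := by
            rw [mul_assoc, mul_inv_cancel₀ (Real.exp_pos _).ne', mul_one]
    have hbs : Real.exp (-(b/2) * s) ≤ 1 := Real.exp_le_one_iff.mpr (by nlinarith)
    calc s ^ p * Real.exp (-(b * s + c / s))
        = (s ^ p * Real.exp (-(c/s))) * Real.exp (-(b/2)*s) * Real.exp (-(b/2)*s) := by
          rw [hexp]; ring
      _ ≤ (n.factorial * (1/c)^n) * 1 * Real.exp (-(b/2)*s) := by
          refine mul_le_mul_of_nonneg_right ?_ (Real.exp_pos _).le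
          refine mul_le_mul (by exact hsp) hbs (Real.exp_pos _).le ?_
          positivity
      _ = (n.factorial * (1/c)^n) * Real.exp (-(b/2)*s) := by ring
      _ ≤ (n.factorial * ((2/b)^n + (1/c)^n)) * Real.exp (-(b/2)*s) := by
          refine mul_le_mul_of_nonneg_right ?_ (Real.exp_pos _).le
          have : (0:ℝ) ≤ (2/b)^n := by positivity
          nlinarith [n.factorial_pos]

lemma Jint_integrand_continuousOn (p b c : ℝ) :
    ContinuousOn (fun s : ℝ => s ^ p * Real.exp (-(b * s + c / s))) (Set.Ioi 0) := by
  apply ContinuousOn.mul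
  · exact fun x hx => (Real.continuousAt_rpow_const x p (Or.inl (ne_of_gt hx))).continuousWithinAt
  · apply Real.continuous_exp.comp_continuousOn
    apply ContinuousOn.neg
    apply ContinuousOn.add
    · exact (continuous_const.mul continuous_id).continuousOn
    · exact continuousOn_const.div continuousOn_id fun x hx => ne_of_gt hx

lemma Jint_integrableOn (p : ℝ) {b c : ℝ} (hb : 0 < b) (hc : 0 < c) :
    IntegrableOn (fun s : ℝ => s ^ p * Real.exp (-(b * s + c / s))) (Set.Ioi (0:ℝ)) := by
  obtain ⟨C, hC0, hC⟩ := Jint_integrand_bound p hb hc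
  have hg : IntegrableOn (fun s : ℝ => C * Real.exp (-(b/2) * s)) (Set.Ioi (0:ℝ)) :=
    (exp_neg_integrableOn_Ioi 0 (half_pos hb)).const_mul C
  refine Integrable.mono' hg ?_ ?_
  · exact (Jint_integrand_continuousOn p b c).aestronglyMeasurable measurableSet_Ioi
  · filter_upwards [ae_restrict_mem measurableSet_Ioi] with s hs
    have hs' : (0:ℝ) < s := hs
    rw [Real.norm_eq_abs, abs_of_nonneg (by positivity)]
    exact hC s hs

lemma Jint_pos (p : ℝ) {b c : ℝ} (hb : 0 < b) (hc : 0 < c) : 0 < Jint p b c := by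
  rw [Jint]
  rw [setIntegral_pos_iff_support_of_nonneg_ae ?_ (Jint_integrableOn p hb hc)]
  · refine lt_of_lt_of_le ?_ (measure_mono (?_ :
      Set.Ioi (0:ℝ) ⊆ Function.support (fun s : ℝ => s ^ p * Real.exp (-(b*s+c/s))) ∩ Set.Ioi 0))
    · simp [Real.volume_Ioi]
    · intro s hs
      have hs' : (0:ℝ) < s := hs
      refine ⟨?_, hs⟩
      simp only [Function.mem_support]
      positivity
  · filter_upwards [ae_restrict_mem measurableSet_Ioi] with s hs
    have hs' : (0:ℝ) < s := hs
    positivity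

lemma Jint_scale (p : ℝ) {b c θ : ℝ} (hθ : 0 < θ) :
    Jint p b c = θ ^ (p + 1) * Jint p (b * θ) (c / θ) := by
  have key := integral_comp_mul_left_Ioi
    (fun s : ℝ => s ^ p * Real.exp (-(b * s + c / s))) 0 hθ
  rw [mul_zero] at key
  have h1 : Jint p b c = θ * ∫ x in Set.Ioi (0:ℝ),
      (θ * x) ^ p * Real.exp (-(b * (θ * x) + c / (θ * x))) := by
    rw [key, smul_eq_mul, ← mul_assoc, mul_inv_cancel₀ hθ.ne', one_mul, Jint]
  have h2 : ∫ x in Set.Ioi (0:ℝ), (θ * x) ^ p * Real.exp (-(b * (θ * x) + c / (θ * x)))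
      = θ ^ p * Jint p (b * θ) (c / θ) := by
    rw [Jint, ← integral_const_mul]
    refine setIntegral_congr_fun measurableSet_Ioi fun x hx => ?_
    have hx' : (0:ℝ) < x := hx
    rw [Real.mul_rpow hθ.le hx'.le]
    have : b * (θ * x) + c / (θ * x) = b * θ * x + c / θ / x := by
      field_simp
    rw [this]; ring
  rw [h1, h2, Real.rpow_add_one hθ.ne' p]; ring

lemma sqrt_mul_sqrt_div {ω φ : ℝ} (hω : 0 < ω) (hφ : 0 < φ) :
    Real.sqrt (ω * φ) * Real.sqrt (ω / φ) = ω := by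
  rw [← Real.sqrt_mul (by positivity)]
  have : ω * φ * (ω / φ) = ω ^ 2 := by field_simp
  rw [this, Real.sqrt_sq hω.le]

lemma sqrt_mul_eq {ω φ : ℝ} (hω : 0 < ω) (hφ : 0 < φ) :
    Real.sqrt (ω * φ) = φ * Real.sqrt (ω / φ) := by
  rw [show φ = Real.sqrt (φ ^ 2) from (Real.sqrt_sq hφ.le).symm,
    ← Real.sqrt_mul (by positivity)]
  congr 1
  field_simp; rw [Real.sq_sqrt (by positivity)]

lemma besselK_eq (ν : ℝ) {ω φ : ℝ} (hω : 0 < ω) (hφ : 0 < φ) :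
    besselK ν (2 * Real.sqrt (ω * φ)) =
      (1/2) * Real.sqrt (ω / φ) ^ ν * Jint (ν - 1) ω φ := by
  have hc : 0 < Real.sqrt (ω / φ) := Real.sqrt_pos.mpr (by positivity)
  set c := Real.sqrt (ω / φ) with hcdef
  have key := integral_comp_mul_left_Ioi
    (fun u : ℝ => u ^ (ν - 1) * Real.exp (-(2 * Real.sqrt (ω * φ) * (u + 1 / u)) / 2)) 0 hc
  rw [mul_zero] at key
  have h1 : (∫ u in Set.Ioi (0:ℝ), u ^ (ν-1) * Real.exp (-(2 * Real.sqrt (ω * φ) * (u + 1/u)) / 2))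
      = c * ∫ u in Set.Ioi (0:ℝ),
        (c * u) ^ (ν-1) * Real.exp (-(2 * Real.sqrt (ω * φ) * (c * u + 1/(c * u))) / 2) := by
    rw [key, smul_eq_mul, ← mul_assoc, mul_inv_cancel₀ hc.ne', one_mul]
  have h2 : (∫ u in Set.Ioi (0:ℝ),
        (c * u) ^ (ν-1) * Real.exp (-(2 * Real.sqrt (ω * φ) * (c * u + 1/(c * u))) / 2))
      = c ^ (ν - 1) * Jint (ν - 1) ω φ := by
    rw [Jint, ← integral_const_mul]
    refine setIntegral_congr_fun measurableSet_Ioi fun u hu => ?_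
    have hu' : (0:ℝ) < u := hu
    have e1 : Real.sqrt (ω * φ) * c = ω := sqrt_mul_sqrt_div hω hφ
    have e2 : Real.sqrt (ω * φ) = φ * c := sqrt_mul_eq hω hφ
    have hexp : -(2 * Real.sqrt (ω * φ) * (c * u + 1/(c * u))) / 2 = -(ω * u + φ / u) := by
      have t0 : -(2 * Real.sqrt (ω * φ) * (c * u + 1/(c * u))) / 2
          = -((Real.sqrt (ω * φ) * c) * u + Real.sqrt (ω * φ) * (1/(c * u))) := by ring
      have t2 : Real.sqrt (ω * φ) * (1/(c * u)) = φ / u := by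
        rw [e2]; field_simp
      rw [t0, e1, t2]
    rw [Real.mul_rpow hc.le hu'.le, hexp]
    ring
  rw [besselK, h1, h2]
  have hcc : c ^ (ν - 1) * c = c ^ ν := by
    rw [← Real.rpow_add_one hc.ne' (ν - 1)]
    congr 1
    ring
  calc (1/2) * (c * (c ^ (ν-1) * Jint (ν-1) ω φ))
      = (1/2) * ((c ^ (ν-1) * c) * Jint (ν-1) ω φ) := by ring
    _ = (1/2) * c ^ ν * Jint (ν-1) ω φ := by rw [hcc]; ring

lemma besselR_eq (ν : ℝ) {ω φ : ℝ} (hω : 0 < ω) (hφ : 0 < φ) :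
    Real.sqrt (φ / ω) * besselR ν (2 * Real.sqrt (ω * φ)) =
      Jint ν ω φ / Jint (ν - 1) ω φ := by
  have hc : 0 < Real.sqrt (ω / φ) := Real.sqrt_pos.mpr (by positivity)
  have hd : 0 < Real.sqrt (φ / ω) := Real.sqrt_pos.mpr (by positivity)
  have hcc : Real.sqrt (φ / ω) * Real.sqrt (ω / φ) = 1 := by
    rw [← Real.sqrt_mul (by positivity)]
    have : φ / ω * (ω / φ) = 1 := by field_simp
    rw [this, Real.sqrt_one]
  have hJ0 : 0 < Jint (ν - 1) ω φ := Jint_pos _ hω hφ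
  have hJ1' := besselK_eq (ν + 1) hω hφ
  have hJ0' := besselK_eq ν hω hφ
  rw [besselR, hJ1', hJ0']
  have hν1 : ν + 1 - 1 = ν := by ring
  rw [hν1]
  set c := Real.sqrt (ω / φ)
  have hpow : c ^ (ν + 1) = c ^ ν * c := Real.rpow_add_one hc.ne' ν
  have hcν : (0:ℝ) < c ^ ν := Real.rpow_pos_of_pos hc ν
  rw [hpow]
  rw [mul_div_assoc']
  rw [div_eq_div_iff (by positivity) hJ0.ne']
  linear_combination ((1/2) * c ^ ν * Jint ν ω φ * Jint (ν-1) ω φ) * hcc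

noncomputable def kfun (s : ℝ) : ℝ := 1 - s⁻¹ - Real.log s

lemma kfun_neg {s : ℝ} (hs : 0 < s) (hs1 : s ≠ 1) : kfun s < 0 := by
  have h := Real.log_lt_sub_one_of_pos (inv_pos.mpr hs) (by
    simp only [ne_eq, inv_eq_one]; exact hs1)
  rw [Real.log_inv] at h
  unfold kfun; linarith

lemma kfun_hasDerivAt {x : ℝ} (hx : x ≠ 0) :
    HasDerivAt kfun ((x ^ 2)⁻¹ - x⁻¹) x := by
  have h1 : HasDerivAt (fun y : ℝ => y⁻¹) (-(x ^ 2)⁻¹) x := hasDerivAt_inv hx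
  have h2 : HasDerivAt Real.log x⁻¹ x := Real.hasDerivAt_log hx
  have h := ((hasDerivAt_const x (1:ℝ)).sub h1).sub h2
  have e : (x ^ 2)⁻¹ - x⁻¹ = 0 - -(x ^ 2)⁻¹ - x⁻¹ := by ring
  rw [e]; exact h

lemma kfun_antitoneOn : AntitoneOn kfun (Set.Ici 1) := by
  apply antitoneOn_of_deriv_nonpos (convex_Ici 1)
  · intro x hx
    have hx0 : (0:ℝ) < x := lt_of_lt_of_le one_pos hx
    exact (kfun_hasDerivAt hx0.ne').continuousAt.continuousWithinAt
  · rw [interior_Ici]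
    intro x hx
    have hx1 : (1:ℝ) < x := hx
    have hx0 : (0:ℝ) < x := by linarith
    exact (kfun_hasDerivAt hx0.ne').differentiableAt.differentiableWithinAt
  · rw [interior_Ici]
    intro x hx
    have hx1 : (1:ℝ) < x := hx
    have hx0 : (0:ℝ) < x := by linarith
    rw [(kfun_hasDerivAt hx0.ne').deriv]
    have h1 : (x ^ 2)⁻¹ ≤ x⁻¹ := inv_anti₀ hx0 (by nlinarith)
    linarith

lemma kfun_monotoneOn : MonotoneOn kfun (Set.Ioc 0 1) := by
  apply monotoneOn_of_deriv_nonneg (convex_Ioc 0 1)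
  · intro x hx
    have hx0 : (0:ℝ) < x := hx.1
    exact (kfun_hasDerivAt hx0.ne').continuousAt.continuousWithinAt
  · rw [interior_Ioc]
    intro x hx
    exact (kfun_hasDerivAt hx.1.ne').differentiableAt.differentiableWithinAt
  · rw [interior_Ioc]
    intro x hx
    obtain ⟨hx0, hx1⟩ := hx
    rw [(kfun_hasDerivAt hx0.ne').deriv]
    have h1 : x⁻¹ ≤ (x ^ 2)⁻¹ := inv_anti₀ (by positivity) (by nlinarith)
    linarith

lemma Jint_abs_integrableOn (p : ℝ) {b c : ℝ} (hb : 0 < b) (hc : 0 < c) :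
    IntegrableOn (fun s : ℝ => |s - 1| * (s ^ p * Real.exp (-(b * s + c / s))))
      (Set.Ioi (0:ℝ)) := by
  have hg : IntegrableOn (fun s : ℝ => s ^ (p+1) * Real.exp (-(b*s + c/s))
      + s ^ p * Real.exp (-(b*s + c/s))) (Set.Ioi (0:ℝ)) :=
    (Jint_integrableOn (p+1) hb hc).add (Jint_integrableOn p hb hc)
  refine Integrable.mono' hg ?_ ?_
  · exact (((continuous_id.sub continuous_const).abs.continuousOn).mul
      (Jint_integrand_continuousOn p b c)).aestronglyMeasurable measurableSet_Ioi
  · filter_upwards [ae_restrict_mem measurableSet_Ioi] with s hs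
    have hs' : (0:ℝ) < s := hs
    rw [Real.norm_eq_abs, abs_of_nonneg (by positivity)]
    have h1 : |s - 1| ≤ s + 1 := by
      rw [abs_le]; constructor <;> linarith
    have h2 : s ^ (p+1) = s ^ p * s := Real.rpow_add_one hs'.ne' p
    calc |s - 1| * (s ^ p * Real.exp (-(b*s + c/s)))
        ≤ (s + 1) * (s ^ p * Real.exp (-(b*s + c/s))) := by
          exact mul_le_mul_of_nonneg_right h1 (by positivity)
      _ = s ^ (p+1) * Real.exp (-(b*s+c/s)) + s ^ p * Real.exp (-(b*s+c/s)) := by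
          rw [h2]; ring

lemma integrand_factor (a β lam : ℝ) {s : ℝ} (hs : 0 < s) :
    s ^ (a - 1 - lam) * Real.exp (-(β * s + lam / s))
      = Real.exp (-(lam - 1) * (1 - kfun s)) * (s ^ (a - 2) * Real.exp (-(β * s + 1 / s))) := by
  rw [Real.rpow_def_of_pos hs, Real.rpow_def_of_pos hs, ← Real.exp_add, ← Real.exp_add,
    ← Real.exp_add]
  congr 1
  unfold kfun
  have : lam / s = lam * s⁻¹ := by ring
  have h1 : (1:ℝ) / s = s⁻¹ := one_div s
  rw [this, h1]
  ring

set_option maxHeartbeats 1000000 in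
lemma core_tendsto (a : ℝ) {β : ℝ} (hβ : 0 < β) :
    Tendsto (fun lam : ℝ => Jint (a - lam) β lam / Jint (a - 1 - lam) β lam)
      atTop (nhds 1) := by
  rw [Metric.tendsto_nhds]
  intro ε' hε'
  set ε : ℝ := min (ε' / 2) (1 / 2) with hεdef
  have hε : 0 < ε := lt_min (by linarith) one_half_pos
  have hε2 : ε ≤ 1 / 2 := min_le_right _ _
  have hεle : ε ≤ ε' / 2 := min_le_left _ _
  have hk1 : kfun (1 - ε) < 0 := kfun_neg (by linarith) (by intro h; nlinarith [hε])
  have hk2 : kfun (1 + ε) < 0 := kfun_neg (by linarith) (by intro h; nlinarith [hε])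
  set η : ℝ := min (-kfun (1 - ε)) (-kfun (1 + ε)) with hηdef
  have hη : 0 < η := lt_min (by linarith) (by linarith)
  have hηa : kfun (1 - ε) ≤ -η := by
    have := min_le_left (-kfun (1 - ε)) (-kfun (1 + ε)); rw [← hηdef] at this; linarith
  have hηb : kfun (1 + ε) ≤ -η := by
    have := min_le_right (-kfun (1 - ε)) (-kfun (1 + ε)); rw [← hηdef] at this; linarith
  -- choose δ
  obtain ⟨δ, hδpos, hδk⟩ : ∃ δ : ℝ, 0 < δ ∧ -(η / 2) ≤ kfun (1 + δ) := by
    have hcont : ContinuousAt kfun 1 := (kfun_hasDerivAt one_ne_zero).continuousAt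
    have h0 : kfun 1 = 0 := by simp [kfun]
    have hmem : Set.Ioi (-(η / 2)) ∈ nhds (kfun 1) := by
      rw [h0]; exact Ioi_mem_nhds (by linarith)
    have hev : ∀ᶠ x in nhds (1:ℝ), kfun x ∈ Set.Ioi (-(η / 2)) := hcont hmem
    rw [Metric.eventually_nhds_iff] at hev
    obtain ⟨r, hr, hball⟩ := hev
    refine ⟨r / 2, by linarith, ?_⟩
    have : kfun (1 + r / 2) ∈ Set.Ioi (-(η / 2)) := by
      apply hball
      rw [Real.dist_eq]
      rw [abs_of_nonneg (by linarith)]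
      linarith
    exact (le_of_lt this)
  -- the fixed constants c and C
  set f1 : ℝ → ℝ := fun s => s ^ (a - 2) * Real.exp (-(β * s + 1 / s)) with hf1def
  set cc : ℝ := ∫ s in Set.Icc (1:ℝ) (1 + δ), f1 s with hccdef
  set CC : ℝ := ∫ s in Set.Ioi (0:ℝ), |s - 1| * f1 s with hCCdef
  have hIccsub : Set.Icc (1:ℝ) (1 + δ) ⊆ Set.Ioi 0 := fun x hx => lt_of_lt_of_le one_pos hx.1
  have hf1int : IntegrableOn f1 (Set.Ioi (0:ℝ)) := Jint_integrableOn (a - 2) hβ one_pos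
  have hcc : 0 < cc := by
    rw [hccdef]
    rw [setIntegral_pos_iff_support_of_nonneg_ae ?_ (hf1int.mono_set hIccsub)]
    · refine lt_of_lt_of_le ?_ (measure_mono (?_ :
        Set.Icc (1:ℝ) (1 + δ) ⊆ Function.support f1 ∩ Set.Icc 1 (1 + δ)))
      · rw [Real.volume_Icc]
        simp only [ENNReal.ofReal_pos]
        linarith
      · intro s hs
        have hs' : (0:ℝ) < s := hIccsub hs
        refine ⟨?_, hs⟩
        simp only [hf1def, Function.mem_support]
        positivity
    · filter_upwards [ae_restrict_mem measurableSet_Icc] with s hs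
      have hs' : (0:ℝ) < s := hIccsub hs
      simp only [hf1def]
      positivity
  have hCCint : IntegrableOn (fun s : ℝ => |s - 1| * f1 s) (Set.Ioi (0:ℝ)) :=
    Jint_abs_integrableOn (a - 2) hβ one_pos
  have hCC0 : 0 ≤ CC := by
    rw [hCCdef]
    refine setIntegral_nonneg measurableSet_Ioi fun s hs => ?_
    have hs' : (0:ℝ) < s := hs
    simp only [hf1def]
    positivity
  -- the tail term tends to zero
  have htail : Tendsto (fun lam : ℝ => (CC / cc) * Real.exp (-(lam - 1) * (η / 2)))
      atTop (nhds 0) := by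
    have h0 : Tendsto (fun lam : ℝ => lam - 1) atTop atTop :=
      tendsto_atTop_add_const_right _ _ tendsto_id
    have h1 : Tendsto (fun lam : ℝ => (lam - 1) * (η / 2)) atTop atTop :=
      h0.atTop_mul_const (by linarith)
    have h2 : Tendsto (fun lam : ℝ => -((lam - 1) * (η / 2))) atTop atBot :=
      tendsto_neg_atTop_atBot.comp h1
    have h3 : Tendsto (fun lam : ℝ => Real.exp (-((lam - 1) * (η / 2)))) atTop (nhds 0) :=
      Real.tendsto_exp_atBot.comp h2
    have h4 := h3.const_mul (CC / cc)
    rw [mul_zero] at h4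
    refine h4.congr fun lam => ?_
    rw [neg_mul]
  have hev2 : ∀ᶠ lam : ℝ in atTop, (CC / cc) * Real.exp (-(lam - 1) * (η / 2)) < ε' / 2 :=
    htail.eventually_lt_const (by linarith)
  filter_upwards [eventually_ge_atTop (1:ℝ), hev2] with lam hlam htl
  -- notation
  have hlam0 : (0:ℝ) < lam := by linarith
  set D : ℝ := Jint (a - 1 - lam) β lam with hDdef
  set N : ℝ := Jint (a - lam) β lam with hNdef
  set f : ℝ → ℝ := fun s => s ^ (a - 1 - lam) * Real.exp (-(β * s + lam / s)) with hfdef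
  have hD : 0 < D := Jint_pos _ hβ hlam0
  have hfint : IntegrableOn f (Set.Ioi (0:ℝ)) := Jint_integrableOn _ hβ hlam0
  have hNint : IntegrableOn (fun s : ℝ => s ^ (a - lam) * Real.exp (-(β * s + lam / s)))
      (Set.Ioi (0:ℝ)) := Jint_integrableOn _ hβ hlam0
  have habsint : IntegrableOn (fun s : ℝ => |s - 1| * f s) (Set.Ioi (0:ℝ)) :=
    Jint_abs_integrableOn _ hβ hlam0
  have hf_nonneg : ∀ s ∈ Set.Ioi (0:ℝ), 0 ≤ f s := by
    intro s hs
    have hs' : (0:ℝ) < s := hs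
    simp only [hfdef]
    positivity
  have hf_ae : 0 ≤ᵐ[volume.restrict (Set.Ioi (0:ℝ))] f := by
    filter_upwards [ae_restrict_mem measurableSet_Ioi] with s hs using hf_nonneg s hs
  -- Step (i): N - D = ∫ (s - 1) * f s
  have hstep1 : N - D = ∫ s in Set.Ioi (0:ℝ), (s - 1) * f s := by
    rw [hNdef, hDdef, Jint, Jint, ← integral_sub hNint hfint]
    refine setIntegral_congr_fun measurableSet_Ioi fun s hs => ?_
    have hs' : (0:ℝ) < s := hs
    have h2 : s ^ (a - lam) = s ^ (a - 1 - lam) * s := by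
      rw [← Real.rpow_add_one hs'.ne' (a - 1 - lam)]
      congr 1
      ring
    simp only [hfdef]
    rw [h2]
    ring
  -- the factorization bound on the far region
  have hfar : ∀ s ∈ Set.Ioi (0:ℝ) \ Set.Icc (1 - ε) (1 + ε),
      |s - 1| * f s ≤ Real.exp (-(lam - 1) * (1 + η)) * (|s - 1| * f1 s) := by
    intro s hs
    obtain ⟨hs0, hsA⟩ := hs
    have hs' : (0:ℝ) < s := hs0
    have hks : kfun s ≤ -η := by
      rw [Set.mem_Icc, not_and_or] at hsA
      rcases hsA with h | h
      · push_neg at h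
        have h1 : s ≤ 1 - ε := h.le
        have := kfun_monotoneOn (Set.mem_Ioc.mpr ⟨hs', by linarith⟩)
          (Set.mem_Ioc.mpr ⟨by linarith, by linarith⟩) h1
        linarith [hηa]
      · push_neg at h
        have h1 : 1 + ε ≤ s := h.le
        have := kfun_antitoneOn (Set.mem_Ici.mpr (by linarith : (1:ℝ) ≤ 1 + ε))
          (Set.mem_Ici.mpr (by linarith)) h1
        linarith [hηb]
    have hfac := integrand_factor a β lam hs'
    have hexple : Real.exp (-(lam - 1) * (1 - kfun s)) ≤ Real.exp (-(lam - 1) * (1 + η)) := by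
      apply Real.exp_le_exp.mpr
      nlinarith
    have hf1nn : 0 ≤ f1 s := by simp only [hf1def]; positivity
    calc |s - 1| * f s = |s - 1| * (Real.exp (-(lam - 1) * (1 - kfun s)) * f1 s) := by
          simp only [hfdef, hf1def] at hfac ⊢
          rw [hfac]
      _ ≤ |s - 1| * (Real.exp (-(lam - 1) * (1 + η)) * f1 s) := by
          refine mul_le_mul_of_nonneg_left ?_ (abs_nonneg _)
          exact mul_le_mul_of_nonneg_right hexple hf1nn
      _ = Real.exp (-(lam - 1) * (1 + η)) * (|s - 1| * f1 s) := by ring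
  -- Step (iii): |N - D| ≤ ε * D + exp(-(lam-1)(1+η)) * CC
  have hstep3 : |N - D| ≤ ε * D + Real.exp (-(lam - 1) * (1 + η)) * CC := by
    rw [hstep1]
    have habs : |∫ s in Set.Ioi (0:ℝ), (s - 1) * f s| ≤ ∫ s in Set.Ioi (0:ℝ), |s - 1| * f s := by
      have h1 := norm_integral_le_integral_norm (μ := volume.restrict (Set.Ioi (0:ℝ)))
        (f := fun s : ℝ => (s - 1) * f s)
      rw [Real.norm_eq_abs] at h1
      refine le_trans h1 (le_of_eq ?_)
      refine setIntegral_congr_fun measurableSet_Ioi fun s hs => ?_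
      rw [Real.norm_eq_abs, abs_mul, abs_of_nonneg (hf_nonneg s hs)]
    refine le_trans habs ?_
    -- split
    have hsplit := integral_inter_add_diff (f := fun s : ℝ => |s - 1| * f s)
      (s := Set.Ioi (0:ℝ)) (t := Set.Icc (1 - ε) (1 + ε)) measurableSet_Icc habsint
    rw [← hsplit]
    have hpart1 : ∫ s in Set.Ioi (0:ℝ) ∩ Set.Icc (1 - ε) (1 + ε), |s - 1| * f s ≤ ε * D := by
      have h1 : ∫ s in Set.Ioi (0:ℝ) ∩ Set.Icc (1 - ε) (1 + ε), |s - 1| * f s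
          ≤ ∫ s in Set.Ioi (0:ℝ) ∩ Set.Icc (1 - ε) (1 + ε), ε * f s := by
        refine setIntegral_mono_on (habsint.mono_set Set.inter_subset_left)
          ((hfint.mono_set Set.inter_subset_left).const_mul ε)
          (measurableSet_Ioi.inter measurableSet_Icc) fun s hs => ?_
        have h2 : |s - 1| ≤ ε := by
          rw [abs_le]
          constructor <;> [linarith [hs.2.1]; linarith [hs.2.2]]
        exact mul_le_mul_of_nonneg_right h2 (hf_nonneg s hs.1)
      refine le_trans h1 ?_
      rw [integral_const_mul]
      refine mul_le_mul_of_nonneg_left ?_ hε.le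
      rw [hDdef, Jint]
      exact setIntegral_mono_set hfint hf_ae
        (HasSubset.Subset.eventuallyLE Set.inter_subset_left)
    have hpart2 : ∫ s in Set.Ioi (0:ℝ) \ Set.Icc (1 - ε) (1 + ε), |s - 1| * f s
        ≤ Real.exp (-(lam - 1) * (1 + η)) * CC := by
      have h1 : ∫ s in Set.Ioi (0:ℝ) \ Set.Icc (1 - ε) (1 + ε), |s - 1| * f s
          ≤ ∫ s in Set.Ioi (0:ℝ) \ Set.Icc (1 - ε) (1 + ε),
              Real.exp (-(lam - 1) * (1 + η)) * (|s - 1| * f1 s) := by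
        refine setIntegral_mono_on (habsint.mono_set Set.diff_subset)
          ((hCCint.mono_set Set.diff_subset).const_mul _)
          (measurableSet_Ioi.diff measurableSet_Icc) hfar
      refine le_trans h1 ?_
      rw [integral_const_mul]
      refine mul_le_mul_of_nonneg_left ?_ (Real.exp_pos _).le
      rw [hCCdef]
      refine setIntegral_mono_set hCCint ?_ (HasSubset.Subset.eventuallyLE Set.diff_subset)
      filter_upwards [ae_restrict_mem measurableSet_Ioi] with s hs
      have hs' : (0:ℝ) < s := hs
      simp only [hf1def]
      positivity
    linarith
  -- Step (iv): lower bound for D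
  have hstep4 : Real.exp (-(lam - 1) * (1 + η / 2)) * cc ≤ D := by
    have h1 : ∫ s in Set.Icc (1:ℝ) (1 + δ), Real.exp (-(lam - 1) * (1 + η / 2)) * f1 s
        ≤ ∫ s in Set.Icc (1:ℝ) (1 + δ), f s := by
      refine setIntegral_mono_on ((hf1int.mono_set hIccsub).const_mul _)
        (hfint.mono_set hIccsub) measurableSet_Icc fun s hs => ?_
      have hs' : (0:ℝ) < s := hIccsub hs
      have hks : -(η / 2) ≤ kfun s := by
        have := kfun_antitoneOn (Set.mem_Ici.mpr hs.1)
          (Set.mem_Ici.mpr (by linarith [hs.1, hδpos] : (1:ℝ) ≤ 1 + δ)) hs.2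
        linarith [hδk]
      have hexple : Real.exp (-(lam - 1) * (1 + η / 2))
          ≤ Real.exp (-(lam - 1) * (1 - kfun s)) := by
        apply Real.exp_le_exp.mpr
        nlinarith
      have hfac := integrand_factor a β lam hs'
      have hf1nn : 0 ≤ f1 s := by simp only [hf1def]; positivity
      calc Real.exp (-(lam - 1) * (1 + η / 2)) * f1 s
          ≤ Real.exp (-(lam - 1) * (1 - kfun s)) * f1 s :=
            mul_le_mul_of_nonneg_right hexple hf1nn
        _ = f s := by
            simp only [hfdef, hf1def] at hfac ⊢
            rw [hfac]
    rw [integral_const_mul] at h1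
    refine le_trans h1 ?_
    rw [hDdef, Jint]
    refine setIntegral_mono_set hfint hf_ae (HasSubset.Subset.eventuallyLE hIccsub)
  -- Step (v): conclude
  have hquot : Real.exp (-(lam - 1) * (1 + η)) * CC / D ≤ (CC / cc) * Real.exp (-(lam - 1) * (η / 2)) := by
    have h1 : Real.exp (-(lam - 1) * (1 + η)) * CC / D
        ≤ Real.exp (-(lam - 1) * (1 + η)) * CC / (Real.exp (-(lam - 1) * (1 + η / 2)) * cc) := by
      refine div_le_div_of_nonneg_left (by positivity) ?_ hstep4
      positivity
    refine le_trans h1 (le_of_eq ?_)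
    rw [div_eq_iff (by positivity)]
    have hee : Real.exp (-(lam - 1) * (η / 2)) * Real.exp (-(lam - 1) * (1 + η / 2))
        = Real.exp (-(lam - 1) * (1 + η)) := by
      rw [← Real.exp_add]; congr 1; ring
    have h2 : CC / cc * Real.exp (-(lam - 1) * (η / 2))
          * (Real.exp (-(lam - 1) * (1 + η / 2)) * cc)
        = CC * (Real.exp (-(lam - 1) * (η / 2)) * Real.exp (-(lam - 1) * (1 + η / 2))) := by
      field_simp
    rw [h2, hee]
    ring
  -- conclusion
  rw [Real.dist_eq]
  have hrw : N / D - 1 = (N - D) / D := by field_simp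
  rw [hrw, abs_div, abs_of_pos hD]
  have h3 : |N - D| / D ≤ (ε * D + Real.exp (-(lam - 1) * (1 + η)) * CC) / D := by
    gcongr
  have h4 : (ε * D + Real.exp (-(lam - 1) * (1 + η)) * CC) / D
      = ε + Real.exp (-(lam - 1) * (1 + η)) * CC / D := by
    field_simp
  calc |N - D| / D ≤ ε + Real.exp (-(lam - 1) * (1 + η)) * CC / D := by rw [← h4]; exact h3
    _ ≤ ε + CC / cc * Real.exp (-(lam - 1) * (η / 2)) := by linarith [hquot]
    _ < ε' / 2 + ε' / 2 := by
        have := htl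
        apply add_lt_add_of_le_of_lt hεle this
    _ = ε' := by ring

end PGGaux

/-- **Theorem 4b: vanishing coefficient of variation of the experts.**
As `ξ → ∞` (i.e. the coefficient of variation `1/√ξ` of the expert opinions tends to 0),
the posterior mean of the Pareto tail index converges to the experts' opinion `θ̄`. -/
theorem pareto_posterior_mean_tendsto_of_precise_experts
    (α₀ ω θbar : ℝ) (hα₀ : 0 < α₀) (hω : 0 < ω) (hθbar : 0 < θbar)
    (K M : ℕ) (hM : 1 ≤ M) :
    Tendsto (fun ξ : ℝ =>
        Real.sqrt (ξ * M * θbar / ω) *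
          besselR (α₀ - M * ξ + K) (2 * Real.sqrt (ω * (ξ * M * θbar))))
      atTop (nhds θbar) := by
  have hM0 : (0:ℝ) < M := by exact_mod_cast Nat.lt_of_lt_of_le Nat.zero_lt_one hM
  have hβ : (0:ℝ) < ω * θbar := by positivity
  set a : ℝ := α₀ + K with hadef
  have hcore := core_tendsto a hβ
  have hcomp : Tendsto (fun ξ : ℝ => (M : ℝ) * ξ) atTop atTop :=
    Tendsto.const_mul_atTop hM0 tendsto_id
  have htend : Tendsto (fun ξ : ℝ =>
      θbar * (Jint (a - M * ξ) (ω * θbar) (M * ξ) / Jint (a - 1 - M * ξ) (ω * θbar) (M * ξ)))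
      atTop (nhds (θbar * 1)) := (hcore.comp hcomp).const_mul θbar
  rw [mul_one] at htend
  refine htend.congr' ?_
  filter_upwards [eventually_gt_atTop (0:ℝ)] with ξ hξ
  have hφ : (0:ℝ) < ξ * M * θbar := by positivity
  have hlam : (0:ℝ) < (M:ℝ) * ξ := by positivity
  have hbr := besselR_eq (α₀ - M * ξ + K) hω hφ
  rw [hbr]
  -- scale by θbar
  have hphi : ξ * (M:ℝ) * θbar / θbar = (M:ℝ) * ξ := by field_simp
  have hs1 := Jint_scale (α₀ - M * ξ + K) (b := ω) (c := ξ * M * θbar) hθbar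
  have hs2 := Jint_scale (α₀ - M * ξ + K - 1) (b := ω) (c := ξ * M * θbar) hθbar
  rw [hphi] at hs1 hs2
  rw [hs1, hs2]
  have hν1 : α₀ - M * ξ + K = a - M * ξ := by rw [hadef]; ring
  rw [hν1]
  have hν3 : a - (M:ℝ) * ξ - 1 = a - 1 - M * ξ := by ring
  rw [hν3]
  have hY : 0 < Jint (a - 1 - M * ξ) (ω * θbar) (M * ξ) := Jint_pos _ hβ hlam
  have hp1 : θbar ^ (a - M * ξ + 1) = θbar ^ (a - 1 - M * ξ + 1) * θbar := by
    rw [← Real.rpow_add_one hθbar.ne' (a - 1 - M * ξ + 1)]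
    congr 1
    ring
  rw [hp1]
  have hpne : θbar ^ (a - 1 - M * ξ + 1) ≠ 0 := (Real.rpow_pos_of_pos hθbar _).ne'
  field_simp
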